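/- Let G be a locally Roelcke precompact Polish group. If A, B ⊆ G are Roelcke precompact subsets, then the product set AB = {a*b : a ∈ A, b ∈ B} is Roelcke precompact. -/

import Mathlib

open scoped Pointwise

/-- A subset `A` of a topological group `G` is *Roelcke precompact* if for every
neighborhood `V` of the identity there is a finite set `F ⊆ G` with `A ⊆ V * F * V`,
where `V * F * V = {v * f * w : v, w ∈ V, f ∈ F}`. -/
def RoelckePrecompact {G : Type*} [Group G] [TopologicalSpace G] (A : Set G) : Prop :=
  ∀ V ∈ nhds (1 : G), ∃ F : Finset G, A ⊆ V * (F : Set G) * V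

/-- A topological group is *locally Roelcke precompact* if some open neighborhood
of the identity is Roelcke precompact. -/
def LocallyRoelckePrecompact (G : Type*) [Group G] [TopologicalSpace G] : Prop :=
  ∃ U : Set G, IsOpen U ∧ (1 : G) ∈ U ∧ RoelckePrecompact U

/-- In a locally Roelcke precompact Polish group, the product of two Roelcke precompact
subsets is Roelcke precompact. -/
theorem roelckePrecompact_mul_of_locallyRoelckePrecompact
    {G : Type*} [Group G] [TopologicalSpace G] [IsTopologicalGroup G] [PolishSpace G]
    (hG : LocallyRoelckePrecompact G)
    (A B : Set G) (hA : RoelckePrecompact A) (hB : RoelckePrecompact B) :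
    RoelckePrecompact (A * B) := by
  classical
  obtain ⟨U, hUopen, hU1, hU⟩ := hG
  intro V hV
  -- choose V₂ with V₂ * V₂ ⊆ V
  obtain ⟨V₂, hV₂open, hV₂1, hV₂V⟩ := exists_open_nhds_one_mul_subset hV
  have hV₂nhds : V₂ ∈ nhds (1 : G) := hV₂open.mem_nhds hV₂1
  have hUV₂ : U ∩ V₂ ∈ nhds (1 : G) :=
    Filter.inter_mem (hUopen.mem_nhds hU1) hV₂nhds
  -- choose V₁ with V₁ * V₁ ⊆ U ∩ V₂
  obtain ⟨V₁, hV₁open, hV₁1, hV₁sub⟩ := exists_open_nhds_one_mul_subset hUV₂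
  have hV₁nhds : V₁ ∈ nhds (1 : G) := hV₁open.mem_nhds hV₁1
  have hV₁V₂ : V₁ ⊆ V₂ := by
    intro x hx
    have : x * 1 ∈ V₁ * V₁ := Set.mul_mem_mul hx hV₁1
    rw [mul_one] at this
    exact (hV₁sub this).2
  obtain ⟨FA, hFA⟩ := hA V₁ hV₁nhds
  obtain ⟨FB, hFB⟩ := hB V₁ hV₁nhds
  -- V₃ : conjugates by elements of FA (resp. inverses of FB) land in V₂
  set V₃ : Set G :=
    (⋂ f ∈ FA, (fun x => f * x * f⁻¹) ⁻¹' V₂) ∩ (⋂ g ∈ FB, (fun x => g⁻¹ * x * g) ⁻¹' V₂)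
    with hV₃def
  have hV₃nhds : V₃ ∈ nhds (1 : G) := by
    refine Filter.inter_mem ?_ ?_
    · refine (Filter.biInter_finset_mem FA).2 fun f _ => ?_
      exact ((continuous_const.mul continuous_id).mul
        continuous_const).continuousAt.preimage_mem_nhds (by simpa using hV₂nhds)
    · refine (Filter.biInter_finset_mem FB).2 fun g _ => ?_
      exact ((continuous_const.mul continuous_id).mul
        continuous_const).continuousAt.preimage_mem_nhds (by simpa using hV₂nhds)
  obtain ⟨FU, hFU⟩ := hU V₃ hV₃nhds
  refine ⟨(FA ×ˢ FU ×ˢ FB).image (fun p => p.1 * p.2.1 * p.2.2), ?_⟩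
  rintro x ⟨a, ha, b, hb, rfl⟩
  obtain ⟨q, hq, w₁, hw₁, rfl⟩ := hFA ha
  obtain ⟨v₁, hv₁, f, hf, rfl⟩ := hq
  obtain ⟨r, hr, v₂, hv₂, rfl⟩ := hFB hb
  obtain ⟨w₂, hw₂, g, hg, rfl⟩ := hr
  -- the middle piece w₁ * w₂ lies in U, hence is covered at scale V₃
  have hmid : w₁ * w₂ ∈ U := (hV₁sub (Set.mul_mem_mul hw₁ hw₂)).1
  obtain ⟨c, hc, v₃', hv₃', heq⟩ := hFU hmid
  obtain ⟨v₃, hv₃, h, hh, rfl⟩ := hc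
  -- extract the conjugation facts
  have hconj₁ : f * v₃ * f⁻¹ ∈ V₂ := by
    have := hv₃.1
    simp only [Set.mem_iInter] at this
    exact this f (Finset.mem_coe.1 hf)
  have hconj₂ : g⁻¹ * v₃' * g ∈ V₂ := by
    have := hv₃'.2
    simp only [Set.mem_iInter] at this
    exact this g (Finset.mem_coe.1 hg)
  -- rewrite the product
  have key : (v₁ * f * w₁) * ((w₂ * g) * v₂)
      = (v₁ * (f * v₃ * f⁻¹)) * ((f * h) * g) * ((g⁻¹ * v₃' * g) * v₂) := by
    have step : (v₁ * f * w₁) * ((w₂ * g) * v₂) = v₁ * f * (w₁ * w₂) * (g * v₂) := by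
      group
    rw [step, ← heq]
    group
  beta_reduce
  rw [key]
  have hL : v₁ * (f * v₃ * f⁻¹) ∈ V :=
    hV₂V (Set.mul_mem_mul (hV₁V₂ hv₁) hconj₁)
  have hR : (g⁻¹ * v₃' * g) * v₂ ∈ V :=
    hV₂V (Set.mul_mem_mul hconj₂ (hV₁V₂ hv₂))
  have hM : (f * h) * g ∈
      ((FA ×ˢ FU ×ˢ FB).image (fun p : G × G × G => p.1 * p.2.1 * p.2.2) : Finset G) := by
    refine Finset.mem_image.2 ⟨(f, h, g), ?_, rfl⟩
    simp only [Finset.mem_product]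
    exact ⟨Finset.mem_coe.1 hf, Finset.mem_coe.1 hh, Finset.mem_coe.1 hg⟩
  exact Set.mul_mem_mul (Set.mul_mem_mul hL (Finset.mem_coe.2 hM)) hR
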